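/- Let λ₁, λ₂, λ₃ ≥ 0 with λ₁² + λ₂² + λ₃² = 1, all λᵢ > 0. Then there exists a permutation (j,k,l) of (1,2,3) with λₗ² = max{λ₁²,λ₂²,λ₃²} such that min over permutations of (λⱼ² + λₖ²)·h(λⱼ²/(λⱼ² + λₖ²)) is attained at (j,k,l); equivalently, for any permutations (j,k,l) and (j',k',l'), if λₗ² ≥ λₗ'² then (λⱼ²+λₖ²)·h(λⱼ²/(λⱼ²+λₖ²)) ≤ (λⱼ'²+λₖ'²)·h(λⱼ'²/(λⱼ'²+λₖ'²)). -/

import Mathlib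

noncomputable def binEnt (x : ℝ) : ℝ := -(x * Real.logb 2 x) - (1 - x) * Real.logb 2 (1 - x)

/-- Control power of the generalized W state for the permutation σ, where the
controller holds qubit σ 0 wait -- here σ 0 = j, σ 1 = k, σ 2 = l. -/
noncomputable def cpW (l : Fin 3 → ℝ) (σ : Equiv.Perm (Fin 3)) : ℝ :=
  ((l (σ 0))^2 + (l (σ 1))^2) * binEnt ((l (σ 0))^2 / ((l (σ 0))^2 + (l (σ 1))^2))

noncomputable def gW (t : ℝ) : ℝ := -(t * Real.log t) - (1 - t) * Real.log (1 - t)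

lemma gW_symm (t : ℝ) : gW (1 - t) = gW t := by
  unfold gW
  ring_nf

lemma gW_hasDeriv {t : ℝ} (h0 : t ≠ 0) (h1 : t ≠ 1) :
    HasDerivAt gW (Real.log (1 - t) - Real.log t) t := by
  have h1' : (1 : ℝ) - t ≠ 0 := by intro h; apply h1; linarith
  have hA : HasDerivAt (fun u : ℝ => u * Real.log u) (Real.log t + 1) t :=
    Real.hasDerivAt_mul_log h0
  have hB : HasDerivAt (fun u : ℝ => (1 - u) * Real.log (1 - u))
      ((Real.log (1 - t) + 1) * (0 - 1)) t := by
    exact (Real.hasDerivAt_mul_log h1').comp t ((hasDerivAt_const t (1:ℝ)).sub (hasDerivAt_id t))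
  have := hA.neg.sub hB
  convert this using 1
  case e'_8 => funext u; simp only [gW, Pi.sub_apply, Pi.neg_apply]
  case e'_9 => ring
  all_goals rfl

lemma gW_monoOn : MonotoneOn gW (Set.Icc 0 (1/2 : ℝ)) := by
  have hcont : Continuous gW := by
    unfold gW
    exact (Real.continuous_mul_log).neg.sub
      ((Real.continuous_mul_log).comp (continuous_const.sub continuous_id))
  apply monotoneOn_of_deriv_nonneg (convex_Icc _ _) hcont.continuousOn
  · intro t ht
    rw [interior_Icc] at ht
    exact (gW_hasDeriv (ne_of_gt ht.1) (by intro h; rw [h] at ht; norm_num at ht)).differentiableAt.differentiableWithinAt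
  · intro t ht
    rw [interior_Icc] at ht
    rw [(gW_hasDeriv (ne_of_gt ht.1) (by intro h; rw [h] at ht; norm_num at ht)).deriv]
    have : Real.log t ≤ Real.log (1 - t) := Real.log_le_log ht.1 (by linarith [ht.2])
    linarith

lemma gW_le {x y : ℝ} (hy : 0 ≤ y) (hyx : y ≤ x) (hy1x : y ≤ 1 - x) : gW y ≤ gW x := by
  rcases le_or_gt x (1/2) with h | h
  · exact gW_monoOn ⟨hy, by linarith⟩ ⟨by linarith, h⟩ hyx
  · calc gW y ≤ gW (1 - x) :=
        gW_monoOn ⟨hy, by linarith⟩ ⟨by linarith, by linarith⟩ hy1x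
      _ = gW x := gW_symm x

lemma cp_formula (a b : ℝ) (ha : 0 < a) (hb : 0 < b) :
    (a + b) * binEnt (a / (a + b)) =
      ((a + b) * Real.log (a + b) - a * Real.log a - b * Real.log b) / Real.log 2 := by
  have hs : 0 < a + b := by linarith
  have h1 : 1 - a / (a + b) = b / (a + b) := by field_simp; ring
  rw [binEnt, h1, Real.logb, Real.logb, Real.log_div ha.ne' hs.ne', Real.log_div hb.ne' hs.ne']
  have hl2 : Real.log 2 ≠ 0 := ne_of_gt (Real.log_pos one_lt_two)
  field_simp
  ring

theorem mcp_gW_attained_at_max (l : Fin 3 → ℝ) (hpos : ∀ i, 0 < l i)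
    (hnorm : (l 0)^2 + (l 1)^2 + (l 2)^2 = 1) :
    ∀ σ σ' : Equiv.Perm (Fin 3),
      (l (σ' 2))^2 ≤ (l (σ 2))^2 → cpW l σ ≤ cpW l σ' := by
  have hxpos : ∀ i, 0 < (l i)^2 := fun i => pow_pos (hpos i) 2
  set T : ℝ := (l 0)^2 * Real.log ((l 0)^2) + (l 1)^2 * Real.log ((l 1)^2)
      + (l 2)^2 * Real.log ((l 2)^2) with hT
  have hsum : ∀ τ : Equiv.Perm (Fin 3),
      (l (τ 0))^2 + (l (τ 1))^2 + (l (τ 2))^2 = 1 := by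
    intro τ
    have h := Equiv.sum_comp τ (fun i => (l i)^2)
    rw [Fin.sum_univ_three, Fin.sum_univ_three] at h
    linarith
  have hTsum : ∀ τ : Equiv.Perm (Fin 3),
      (l (τ 0))^2 * Real.log ((l (τ 0))^2) + (l (τ 1))^2 * Real.log ((l (τ 1))^2)
        + (l (τ 2))^2 * Real.log ((l (τ 2))^2) = T := by
    intro τ
    have h := Equiv.sum_comp τ (fun i => (l i)^2 * Real.log ((l i)^2))
    rw [Fin.sum_univ_three, Fin.sum_univ_three] at h
    linarith
  have hcp : ∀ τ : Equiv.Perm (Fin 3),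
      cpW l τ = ((1 - (l (τ 2))^2) * Real.log (1 - (l (τ 2))^2)
        + (l (τ 2))^2 * Real.log ((l (τ 2))^2) - T) / Real.log 2 := by
    intro τ
    have hab : (l (τ 0))^2 + (l (τ 1))^2 = 1 - (l (τ 2))^2 := by
      have := hsum τ; linarith
    rw [cpW, cp_formula _ _ (hxpos _) (hxpos _), hab]
    congr 1
    have := hTsum τ
    linarith
  intro σ σ' h
  rw [hcp σ, hcp σ']
  rcases eq_or_ne (σ 2) (σ' 2) with heq | hne
  · rw [heq]
  · have hle : (l (σ 2))^2 + (l (σ' 2))^2 ≤ 1 := by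
      have h1 : ∑ j ∈ ({σ 2, σ' 2} : Finset (Fin 3)), (l j)^2 ≤ ∑ j, (l j)^2 :=
        Finset.sum_le_univ_sum_of_nonneg (fun i => (hxpos i).le)
      rw [Finset.sum_pair hne, Fin.sum_univ_three] at h1
      linarith
    have hg : gW ((l (σ' 2))^2) ≤ gW ((l (σ 2))^2) :=
      gW_le (hxpos _).le h (by linarith)
    have hl2 : (0:ℝ) < Real.log 2 := Real.log_pos one_lt_two
    apply (div_le_div_iff_of_pos_right hl2).mpr
    unfold gW at hg
    linarith
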